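/- Let A ∈ B(H) be injective and g ∈ ran A with unique solution f to Af = g. If the Krylov intersection closure(K(A,g)) ∩ A(K(A,g)-perp) is trivial, then f belongs to closure(K(A,g)). -/

import Mathlib

/-- Proposition 2.3(i): if `A` is bounded and injective, `A f = g`, and the Krylov
intersection `closure(K(A,g)) ∩ A(K(A,g)ᗮ)` is trivial, then `f ∈ closure(K(A,g))`. -/
theorem stmt4 {H : Type*} [NormedAddCommGroup H] [InnerProductSpace ℂ H]
    [CompleteSpace H] (A : H →L[ℂ] H) (hA : Function.Injective A)
    (g f : H) (hf : A f = g)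
    (hJ : (((Submodule.span ℂ (Set.range fun k : ℕ => (A ^ k) g)).topologicalClosure : Set H) ∩
            (A '' ((Submodule.span ℂ (Set.range fun k : ℕ => (A ^ k) g))ᗮ : Set H))) = {0}) :
    f ∈ (Submodule.span ℂ (Set.range fun k : ℕ => (A ^ k) g)).topologicalClosure := by
  set K : Submodule ℂ H := Submodule.span ℂ (Set.range fun k : ℕ => (A ^ k) g) with hKdef
  set Kc : Submodule ℂ H := K.topologicalClosure with hKcdef
  have hgK : g ∈ K := Submodule.subset_span ⟨0, by simp⟩
  -- A maps K into K
  have hmapK : ∀ x ∈ K, A x ∈ K := by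
    intro x hx
    induction hx using Submodule.span_induction with
    | mem y hy =>
        obtain ⟨k, rfl⟩ := hy
        exact Submodule.subset_span ⟨k + 1, by simp only []; rw [pow_succ', ContinuousLinearMap.mul_apply]⟩
    | zero => simp
    | add y z _ _ hy hz => rw [map_add]; exact K.add_mem hy hz
    | smul c y _ hy => rw [map_smul]; exact K.smul_mem c hy
  -- A maps Kc into Kc
  have hmapKc : ∀ x ∈ Kc, A x ∈ Kc := by
    intro x hx
    exact map_mem_closure A.continuous hx hmapK
  -- orthogonal decomposition
  set f₁ : H := (Kc.orthogonalProjectionOnto f : H) with hf₁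
  have hf₁Kc : f₁ ∈ Kc := (Kc.orthogonalProjectionOnto f).2
  have hf₂perp : f - f₁ ∈ Kcᗮ := Submodule.sub_starProjection_mem_orthogonal (K := Kc) f
  have hf₂Kperp : f - f₁ ∈ Kᗮ :=
    Submodule.orthogonal_le K.le_topologicalClosure hf₂perp
  have hAf₂Kc : A (f - f₁) ∈ Kc := by
    have : A (f - f₁) = g - A f₁ := by rw [map_sub, hf]
    rw [this]
    exact Kc.sub_mem (K.le_topologicalClosure hgK) (hmapKc f₁ hf₁Kc)
  have hmem : A (f - f₁) ∈ ((Kc : Set H) ∩ (A '' (Kᗮ : Set H))) :=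
    ⟨hAf₂Kc, ⟨f - f₁, hf₂Kperp, rfl⟩⟩
  rw [hJ] at hmem
  have h0 : f - f₁ = 0 := hA (by simpa using hmem)
  have : f = f₁ := by linear_combination (norm := module) h0
  rw [this]
  exact hf₁Kc
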